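/- The difference (ln b_{n+1})/(n+1) − (ln b_n)/n converges to 0 as n → ∞. -/

import Mathlib

open Finset Filter

noncomputable def b (n : ℕ) : ℝ :=
  (1 / (n : ℝ) ^ 3) * ∑ k ∈ Finset.range n,
    (3 * (k : ℝ) ^ 2 + 3 * (k : ℝ) + 1) * ((n - 1).choose k : ℝ) ^ 2 * ((n + k).choose k : ℝ) ^ 2

def T (n k : ℕ) : ℕ := (3*k^2+3*k+1) * ((n-1).choose k)^2 * ((n+k).choose k)^2

def S (n : ℕ) : ℕ := ∑ k ∈ Finset.range n, T n k

-- identity-based inequalities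
lemma A1 {n k : ℕ} (hn : 1 ≤ n) (h : 2*k ≤ n) : n.choose k ≤ 2 * (n-1).choose k := by
  have hk : k < n := by omega
  have hid : (n-1).choose k * ((n-1) + 1) = ((n-1)+1).choose k * ((n-1) + 1 - k) :=
    Nat.choose_mul_succ_eq (n-1) k
  have h1 : (n-1) + 1 = n := by omega
  rw [h1] at hid
  have hpos : 0 < n - k := by omega
  have : n.choose k * (n - k) ≤ (2 * (n-1).choose k) * (n - k) := by
    calc n.choose k * (n - k) = (n-1).choose k * n := hid.symm
      _ ≤ (n-1).choose k * (2*(n-k)) := Nat.mul_le_mul_left _ (by omega)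
      _ = (2 * (n-1).choose k) * (n - k) := by ring
  exact Nat.le_of_mul_le_mul_right this hpos

lemma A2 {n k : ℕ} (h : k ≤ n + 1) : (n+k+1).choose k ≤ 2 * (n+k).choose k := by
  have hid : (n+k).choose k * ((n+k) + 1) = ((n+k)+1).choose k * ((n+k) + 1 - k) :=
    Nat.choose_mul_succ_eq (n+k) k
  have h1 : (n+k) + 1 - k = n + 1 := by omega
  rw [h1] at hid
  have : (n+k+1).choose k * (n+1) ≤ (2 * (n+k).choose k) * (n+1) := by
    calc (n+k+1).choose k * (n+1) = (n+k).choose k * (n+k+1) := by rw [← hid]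
      _ ≤ (n+k).choose k * (2*(n+1)) := Nat.mul_le_mul_left _ (by omega)
      _ = (2 * (n+k).choose k) * (n+1) := by ring
  exact Nat.le_of_mul_le_mul_right this (by omega)

lemma B1 {n k : ℕ} (hn : 1 ≤ n) (hk : 1 ≤ k) (h : n ≤ 2*k) :
    n.choose k ≤ 2 * (n-1).choose (k-1) := by
  have hid : Nat.succ (n-1) * (n-1).choose (k-1) = ((n-1)+1).choose ((k-1)+1) * Nat.succ (k-1) :=
    Nat.add_one_mul_choose_eq (n-1) (k-1)
  have h1 : (n-1) + 1 = n := by omega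
  have h2 : (k-1) + 1 = k := by omega
  rw [h1, h2, Nat.succ_eq_add_one, Nat.succ_eq_add_one, h1, h2] at hid
  have : n.choose k * k ≤ (2 * (n-1).choose (k-1)) * k := by
    calc n.choose k * k = n * (n-1).choose (k-1) := hid.symm
      _ ≤ (2*k) * (n-1).choose (k-1) := Nat.mul_le_mul_right _ h
      _ = (2 * (n-1).choose (k-1)) * k := by ring
  exact Nat.le_of_mul_le_mul_right this (by omega)

lemma B2 {n k : ℕ} (hk : 1 ≤ k) (h : n ≤ 2*k) :
    (n+k).choose k ≤ 3 * (n+k-1).choose (k-1) := by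
  have hid : Nat.succ (n+k-1) * (n+k-1).choose (k-1)
      = ((n+k-1)+1).choose ((k-1)+1) * Nat.succ (k-1) :=
    Nat.add_one_mul_choose_eq (n+k-1) (k-1)
  have h1 : (n+k-1) + 1 = n+k := by omega
  have h2 : (k-1) + 1 = k := by omega
  rw [h1, h2, Nat.succ_eq_add_one, Nat.succ_eq_add_one, h1, h2] at hid
  have : (n+k).choose k * k ≤ (3 * (n+k-1).choose (k-1)) * k := by
    calc (n+k).choose k * k = (n+k) * (n+k-1).choose (k-1) := hid.symm
      _ ≤ (3*k) * (n+k-1).choose (k-1) := Nat.mul_le_mul_right _ (by omega)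
      _ = (3 * (n+k-1).choose (k-1)) * k := by ring
  exact Nat.le_of_mul_le_mul_right this (by omega)

lemma T_key {n k : ℕ} (hn : 1 ≤ n) (hk : k ≤ n) :
    T (n+1) k ≤ 16 * T n k + 1008 * T n (k-1) := by
  rcases Nat.eq_zero_or_pos k with rfl | hk1
  · simp [T]
  rcases le_or_gt (2*k) n with hc | hc
  · -- T (n+1) k ≤ 16 * T n k
    have e1 : (n+1) - 1 = n := by omega
    have c1 : n.choose k ≤ 2 * (n-1).choose k := A1 hn hc
    have c2 : ((n+1)+k).choose k ≤ 2 * (n+k).choose k := by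
      have := A2 (n := n) (k := k) (by omega)
      convert this using 2 <;> omega
    have : T (n+1) k ≤ 16 * T n k := by
      unfold T
      rw [e1]
      calc (3*k^2+3*k+1) * (n.choose k)^2 * (((n+1)+k).choose k)^2
          ≤ (3*k^2+3*k+1) * (2 * (n-1).choose k)^2 * (2 * (n+k).choose k)^2 := by
            exact Nat.mul_le_mul (Nat.mul_le_mul_left _ (Nat.pow_le_pow_left c1 2))
              (Nat.pow_le_pow_left c2 2)
        _ = 16 * ((3*k^2+3*k+1) * ((n-1).choose k)^2 * ((n+k).choose k)^2) := by ring
    omega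
  · -- T (n+1) k ≤ 1008 * T n (k-1)
    have e1 : (n+1) - 1 = n := by omega
    have c1 : n.choose k ≤ 2 * (n-1).choose (k-1) := B1 hn hk1 (by omega)
    have c2 : ((n+1)+k).choose k ≤ 6 * (n+(k-1)).choose (k-1) := by
      have ha : ((n+1)+k).choose k ≤ 2 * (n+k).choose k := by
        have := A2 (n := n) (k := k) (by omega)
        convert this using 2 <;> omega
      have hb : (n+k).choose k ≤ 3 * (n+k-1).choose (k-1) := B2 hk1 (by omega)
      have e2 : n+k-1 = n+(k-1) := by omega
      rw [e2] at hb
      calc ((n+1)+k).choose k ≤ 2 * (n+k).choose k := ha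
        _ ≤ 2 * (3 * (n+(k-1)).choose (k-1)) := Nat.mul_le_mul_left _ hb
        _ = 6 * (n+(k-1)).choose (k-1) := by ring
    have cp : 3*k^2+3*k+1 ≤ 7 * (3*(k-1)^2+3*(k-1)+1) := by
      obtain ⟨j, rfl⟩ := Nat.exists_eq_add_of_le hk1
      simp only [Nat.add_sub_cancel_left]
      nlinarith [sq_nonneg j]
    have : T (n+1) k ≤ 1008 * T n (k-1) := by
      unfold T
      rw [e1]
      calc (3*k^2+3*k+1) * (n.choose k)^2 * (((n+1)+k).choose k)^2
          ≤ (7 * (3*(k-1)^2+3*(k-1)+1)) * (2 * (n-1).choose (k-1))^2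
              * (6 * (n+(k-1)).choose (k-1))^2 := by
            exact Nat.mul_le_mul (Nat.mul_le_mul cp (Nat.pow_le_pow_left c1 2))
              (Nat.pow_le_pow_left c2 2)
        _ = 1008 * ((3*(k-1)^2+3*(k-1)+1) * ((n-1).choose (k-1))^2 * ((n+(k-1)).choose (k-1))^2) := by
            ring
    omega

lemma T_zero (n : ℕ) : T n 0 = 1 := by simp [T]

lemma S_pos {n : ℕ} (hn : 1 ≤ n) : 1 ≤ S n := by
  have h0 : (0:ℕ) ∈ Finset.range n := Finset.mem_range.mpr (by omega)
  calc 1 = T n 0 := (T_zero n).symm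
    _ ≤ S n := Finset.single_le_sum (fun i _ => Nat.zero_le _) h0

lemma S_mono (n : ℕ) : S n ≤ S (n+1) := by
  unfold S
  calc ∑ k ∈ range n, T n k ≤ ∑ k ∈ range n, T (n+1) k := by
        refine Finset.sum_le_sum fun k hk => ?_
        unfold T
        have e1 : (n+1)-1 = n := by omega
        rw [e1]
        exact Nat.mul_le_mul
          (Nat.mul_le_mul_left _ (Nat.pow_le_pow_left (Nat.choose_le_choose k (by omega)) 2))
          (Nat.pow_le_pow_left (Nat.choose_le_choose k (by omega)) 2)
    _ ≤ ∑ k ∈ range (n+1), T (n+1) k := by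
        refine Finset.sum_le_sum_of_subset (Finset.range_subset_range.mpr (by omega))

lemma S_succ_le {n : ℕ} (hn : 1 ≤ n) : S (n+1) ≤ 2032 * S n := by
  have h1 : S (n+1) ≤ ∑ k ∈ range (n+1), (16 * T n k + 1008 * T n (k-1)) :=
    Finset.sum_le_sum fun k hk => T_key hn (by simpa using Nat.lt_succ_iff.mp (Finset.mem_range.mp hk))
  have h2 : ∑ k ∈ range (n+1), (16 * T n k + 1008 * T n (k-1))
      = 16 * (∑ k ∈ range (n+1), T n k) + 1008 * (∑ k ∈ range (n+1), T n (k-1)) := by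
    rw [Finset.sum_add_distrib, Finset.mul_sum, Finset.mul_sum]
  have h3 : ∑ k ∈ range (n+1), T n k = S n := by
    rw [Finset.sum_range_succ]
    have : T n n = 0 := by
      unfold T
      have : (n-1).choose n = 0 := Nat.choose_eq_zero_of_lt (by omega)
      simp [this]
    simp [S, this]
  have h4 : ∑ k ∈ range (n+1), T n (k-1) = S n + 1 := by
    rw [Finset.sum_range_succ']
    simp only [Nat.add_sub_cancel, Nat.zero_sub, T_zero]
    rfl
  have h5 : 1 ≤ S n := S_pos hn
  omega

lemma b_eq (n : ℕ) : b n = (S n : ℝ) / (n:ℝ)^3 := by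
  unfold b S T
  rw [Nat.cast_sum, one_div, inv_mul_eq_div]
  congr 1
  refine Finset.sum_congr rfl fun k _ => ?_
  push_cast
  ring

lemma b_pos {n : ℕ} (hn : 1 ≤ n) : 0 < b n := by
  rw [b_eq]
  have h1 : (0:ℝ) < S n := by exact_mod_cast S_pos hn
  have h2 : (0:ℝ) < (n:ℝ)^3 := by positivity
  positivity

lemma b_ratio_upper {n : ℕ} (hn : 1 ≤ n) : b (n+1) ≤ 2032 * b n := by
  rw [b_eq, b_eq]
  have hS : (S (n+1) : ℝ) ≤ 2032 * S n := by exact_mod_cast S_succ_le hn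
  have hn3 : (0:ℝ) < (n:ℝ)^3 := by positivity
  have hn13 : (0:ℝ) < ((n:ℝ)+1)^3 := by positivity
  have hle : (n:ℝ)^3 ≤ ((n:ℝ)+1)^3 := by nlinarith [(Nat.one_le_cast.mpr hn : (1:ℝ) ≤ n)]
  push_cast
  calc (S (n+1) : ℝ) / ((n:ℝ)+1)^3 ≤ (2032 * S n) / ((n:ℝ)+1)^3 := by gcongr
    _ ≤ (2032 * S n) / (n:ℝ)^3 := by
        apply div_le_div_of_nonneg_left _ hn3 hle
        have : (0:ℝ) ≤ S n := Nat.cast_nonneg _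
        positivity
    _ = 2032 * ((S n : ℝ) / (n:ℝ)^3) := by ring

lemma b_ratio_lower {n : ℕ} (hn : 1 ≤ n) : b n ≤ 8 * b (n+1) := by
  rw [b_eq, b_eq]
  have hS : (S n : ℝ) ≤ S (n+1) := by exact_mod_cast S_mono n
  have hn3 : (0:ℝ) < (n:ℝ)^3 := by positivity
  have hSpos : (0:ℝ) < S n := by exact_mod_cast S_pos hn
  have hn1 : (1:ℝ) ≤ (n:ℝ) := Nat.one_le_cast.mpr hn
  have hle : ((n:ℝ)+1)^3 ≤ 8 * (n:ℝ)^3 := by nlinarith [sq_nonneg ((n:ℝ)-1), sq_nonneg (n:ℝ)]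
  push_cast
  rw [div_le_iff₀ hn3]
  have h8 : (0:ℝ) < ((n:ℝ)+1)^3 := by positivity
  calc (S n : ℝ) ≤ (S (n+1) : ℝ) := hS
    _ = (S (n+1) : ℝ) / ((n:ℝ)+1)^3 * ((n:ℝ)+1)^3 := by field_simp
    _ ≤ (S (n+1) : ℝ) / ((n:ℝ)+1)^3 * (8 * (n:ℝ)^3) := by
        apply mul_le_mul_of_nonneg_left hle
        positivity
    _ = 8 * ((S (n+1) : ℝ) / ((n:ℝ)+1)^3) * (n:ℝ)^3 := by ring

lemma b_one : b 1 = 1 := by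
  rw [b_eq]
  have h : S 1 = 1 := by simp [S, T]
  rw [h]
  norm_num

lemma log_diff_bound {n : ℕ} (hn : 1 ≤ n) :
    |Real.log (b (n+1)) - Real.log (b n)| ≤ Real.log 2032 := by
  have hp := b_pos hn
  have hp' := b_pos (n := n+1) (by omega)
  rw [abs_sub_le_iff]
  constructor
  · have h1 : Real.log (b (n+1)) ≤ Real.log (2032 * b n) :=
      Real.log_le_log hp' (b_ratio_upper hn)
    rw [Real.log_mul (by norm_num) (ne_of_gt hp)] at h1
    linarith
  · have h1 : Real.log (b n) ≤ Real.log (8 * b (n+1)) :=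
      Real.log_le_log hp (b_ratio_lower hn)
    rw [Real.log_mul (by norm_num) (ne_of_gt hp')] at h1
    have h2 : Real.log 8 ≤ Real.log 2032 := Real.log_le_log (by norm_num) (by norm_num)
    linarith

lemma abs_log_b_le : ∀ n : ℕ, 1 ≤ n → |Real.log (b n)| ≤ Real.log 2032 * n := by
  intro n
  induction n with
  | zero => intro h; omega
  | succ m ih =>
    intro _
    rcases Nat.eq_zero_or_pos m with rfl | hm
    · rw [b_one]
      simp
      positivity
    · have h1 := log_diff_bound hm
      have h2 := ih hm
      have h3 : |Real.log (b (m+1))| ≤ |Real.log (b m)| + Real.log 2032 := by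
        calc |Real.log (b (m+1))|
            = |Real.log (b m) + (Real.log (b (m+1)) - Real.log (b m))| := by ring_nf
          _ ≤ |Real.log (b m)| + |Real.log (b (m+1)) - Real.log (b m)| := abs_add_le _ _
          _ ≤ |Real.log (b m)| + Real.log 2032 := by linarith
      push_cast
      nlinarith

theorem b_log_diff_tendsto_zero :
    Filter.Tendsto
      (fun n : ℕ => Real.log (b (n + 1)) / ((n : ℝ) + 1) - Real.log (b n) / (n : ℝ))
      Filter.atTop (nhds 0) := by
  have hM : (0:ℝ) ≤ Real.log 2032 := Real.log_nonneg (by norm_num)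
  apply squeeze_zero_norm' (a := fun n : ℕ => 2 * Real.log 2032 / n)
  · filter_upwards [eventually_ge_atTop 1] with n hn
    set a := Real.log (b n) with ha
    set a' := Real.log (b (n+1)) with ha'
    have hnR : (1:ℝ) ≤ (n:ℝ) := Nat.one_le_cast.mpr hn
    have hn0 : (0:ℝ) < (n:ℝ) := by linarith
    have hn1 : (0:ℝ) < (n:ℝ) + 1 := by linarith
    have hd : a'/((n:ℝ)+1) - a/(n:ℝ)
        = (a' - a)/((n:ℝ)+1) + a * (1/((n:ℝ)+1) - 1/(n:ℝ)) := by
      field_simp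
      ring
    have h1 : |a' - a| ≤ Real.log 2032 := log_diff_bound hn
    have h2 : |a| ≤ Real.log 2032 * n := abs_log_b_le n hn
    rw [Real.norm_eq_abs, hd]
    have e1 : |(a' - a)/((n:ℝ)+1)| ≤ Real.log 2032 / (n:ℝ) := by
      rw [abs_div, abs_of_pos hn1]
      exact div_le_div₀ hM h1 hn0 (by linarith)
    have e2 : |a * (1/((n:ℝ)+1) - 1/(n:ℝ))| ≤ Real.log 2032 / (n:ℝ) := by
      rw [abs_mul]
      have hx : |1/((n:ℝ)+1) - 1/(n:ℝ)| = 1/((n:ℝ)*((n:ℝ)+1)) := by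
        rw [abs_of_nonpos (by rw [sub_nonpos]; gcongr; linarith)]
        field_simp
        ring
      rw [hx]
      calc |a| * (1/((n:ℝ)*((n:ℝ)+1))) ≤ (Real.log 2032 * (n:ℝ)) * (1/((n:ℝ)*((n:ℝ)+1))) := by
            apply mul_le_mul_of_nonneg_right h2
            positivity
        _ = Real.log 2032 / ((n:ℝ)+1) := by field_simp
        _ ≤ Real.log 2032 / (n:ℝ) := by gcongr <;> linarith
    calc |(a' - a)/((n:ℝ)+1) + a * (1/((n:ℝ)+1) - 1/(n:ℝ))|
        ≤ |(a' - a)/((n:ℝ)+1)| + |a * (1/((n:ℝ)+1) - 1/(n:ℝ))| := abs_add_le _ _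
      _ ≤ Real.log 2032 / (n:ℝ) + Real.log 2032 / (n:ℝ) := by linarith
      _ = 2 * Real.log 2032 / (n:ℝ) := by ring
  · exact tendsto_const_div_atTop_nhds_zero_nat (2 * Real.log 2032)
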